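/- Let v be in the Siegel upper half plane X_n (so v̄ − v, v + i·1_n and v̄ − i·1_n are invertible), and assume additionally that v − i·1_n is invertible. Then for every u ∈ ℂⁿ there exists a unique η ∈ ℂⁿ with u = (1/(2i))[(v + i·1_n)η − (v − i·1_n)η̄], and it is given by η = (v̄ − i·1_n)(v̄ − v)⁻¹(v − i·1_n)[(v − i·1_n)⁻¹u − (v̄ − i·1_n)⁻¹ū]; conversely this formula for η inverts the map η ↦ u = (1/(2i))[(v + i·1_n)η − (v − i·1_n)η̄]. -/

import Mathlib

open Matrix
open scoped ComplexOrder

private lemma stmt15_star_mulVec {n : ℕ} (A : Matrix (Fin n) (Fin n) ℂ) (x : Fin n → ℂ) :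
    star (A.mulVec x) = (A.map (starRingEnd ℂ)).mulVec (star x) := by
  rw [Matrix.star_mulVec, show Aᴴ = (A.map (starRingEnd ℂ))ᵀ from rfl,
    Matrix.vecMul_transpose]

private lemma stmt15_isUnit_det_aux {n : ℕ} {N M : Matrix (Fin n) (Fin n) ℂ} (hM : M.PosDef)
    {c : ℂ} (hc : c ≠ 0) (h : N - Nᴴ = c • M) : IsUnit N.det := by
  rw [isUnit_iff_ne_zero]
  intro hdet
  obtain ⟨z, hz, hNz⟩ := (Matrix.exists_mulVec_eq_zero_iff).mpr hdet
  have h1 : star z ⬝ᵥ (N.mulVec z) = 0 := by rw [hNz, dotProduct_zero]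
  have h2 : star z ⬝ᵥ (Nᴴ.mulVec z) = 0 := by
    have hs := congrArg star hNz
    rw [Matrix.star_mulVec, star_zero] at hs
    rw [Matrix.dotProduct_mulVec, hs, zero_dotProduct]
  have h3 : star z ⬝ᵥ ((N - Nᴴ).mulVec z) = 0 := by
    rw [Matrix.sub_mulVec, dotProduct_sub, h1, h2, sub_zero]
  rw [h, Matrix.smul_mulVec, dotProduct_smul, smul_eq_mul, mul_eq_zero] at h3
  rcases h3 with h3 | h3
  · exact hc h3
  · exact (hM.dotProduct_mulVec_pos hz).ne' h3

private lemma stmt15_posDef_add_one {n : ℕ} {M : Matrix (Fin n) (Fin n) ℂ} (hM : M.PosDef) :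
    (M + 1).PosDef := by
  rw [Matrix.posDef_iff_dotProduct_mulVec]
  refine ⟨?_, fun x hx => ?_⟩
  · rw [Matrix.IsHermitian, Matrix.conjTranspose_add, hM.1.eq, Matrix.conjTranspose_one]
  · rw [Matrix.add_mulVec, Matrix.one_mulVec, dotProduct_add]
    exact add_pos_of_pos_of_nonneg (hM.dotProduct_mulVec_pos hx) (dotProduct_star_self_nonneg x)

/-- On the Siegel upper half plane, the map η ↦ u = (1/2i)[(v+i)η - (v-i)η̄] is a
bijection of ℂⁿ, with inverse given by the FC⁻¹-formula. -/
theorem stmt_15 (n : ℕ) (v : Matrix (Fin n) (Fin n) ℂ) (hv : vᵀ = v)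
    (hpos : (((2 * Complex.I)⁻¹) • (v - v.map (starRingEnd ℂ))).PosDef)
    (hinv : IsUnit (v - Complex.I • 1)) :
    ∀ u : Fin n → ℂ,
      (u = ((2 * Complex.I)⁻¹) •
          ((v + Complex.I • 1).mulVec
              (((v.map (starRingEnd ℂ) - Complex.I • 1)
                * (v.map (starRingEnd ℂ) - v)⁻¹ * (v - Complex.I • 1)).mulVec
                ((v - Complex.I • 1)⁻¹.mulVec u
                  - (v.map (starRingEnd ℂ) - Complex.I • 1)⁻¹.mulVec (star u)))
            - (v - Complex.I • 1).mulVec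
              (star (((v.map (starRingEnd ℂ) - Complex.I • 1)
                * (v.map (starRingEnd ℂ) - v)⁻¹ * (v - Complex.I • 1)).mulVec
                ((v - Complex.I • 1)⁻¹.mulVec u
                  - (v.map (starRingEnd ℂ) - Complex.I • 1)⁻¹.mulVec (star u)))))) ∧
      (∀ η : Fin n → ℂ,
        u = ((2 * Complex.I)⁻¹) •
            ((v + Complex.I • 1).mulVec η - (v - Complex.I • 1).mulVec (star η)) →
        η = ((v.map (starRingEnd ℂ) - Complex.I • 1)
              * (v.map (starRingEnd ℂ) - v)⁻¹ * (v - Complex.I • 1)).mulVec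
            ((v - Complex.I • 1)⁻¹.mulVec u
              - (v.map (starRingEnd ℂ) - Complex.I • 1)⁻¹.mulVec (star u))) := by
  have h2I : (2 * Complex.I) ≠ 0 := mul_ne_zero two_ne_zero Complex.I_ne_zero
  set vb := v.map (starRingEnd ℂ) with hvb
  set Mh := ((2 * Complex.I)⁻¹) • (v - vb) with hMh
  set P := v - Complex.I • 1 with hPdef
  set Q := v + Complex.I • 1 with hQdef
  set Qb := vb - Complex.I • 1 with hQbdef
  set Pb := vb + Complex.I • 1 with hPbdef
  set D := vb - v with hDdef
  set C := Qb * D⁻¹ * P with hCdef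
  have hsymm : ∀ i j, v i j = v j i := fun i j => (congrFun (congrFun hv j) i : _)
  have hvH : vᴴ = vb := by
    ext i j
    exact congrArg (starRingEnd ℂ) (hsymm j i)
  have hvbH : vbᴴ = v := by
    ext i j
    simp only [Matrix.conjTranspose_apply, hvb, Matrix.map_apply]
    rw [Complex.star_def, Complex.conj_conj, hsymm j i]
  have hQH : Qᴴ = Qb := by
    rw [hQdef, Matrix.conjTranspose_add, Matrix.conjTranspose_smul, Matrix.conjTranspose_one,
      hvH, Complex.star_def, Complex.conj_I, neg_smul, ← sub_eq_add_neg, hQbdef]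
  have hPH : Pᴴ = Pb := by
    rw [hPdef, Matrix.conjTranspose_sub, Matrix.conjTranspose_smul, Matrix.conjTranspose_one,
      hvH, Complex.star_def, Complex.conj_I, neg_smul, sub_neg_eq_add, hPbdef]
  have hDH : Dᴴ = -D := by
    rw [hDdef, Matrix.conjTranspose_sub, hvbH, hvH, ← neg_sub]
  have hPdet : IsUnit P.det := (Matrix.isUnit_iff_isUnit_det P).mp hinv
  have hQsub : Q - Qᴴ = (2 * Complex.I) • (Mh + 1) := by
    rw [hQH, smul_add, hMh, smul_inv_smul₀ h2I, hQdef, hQbdef, mul_smul, two_smul]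
    abel
  have hQdet : IsUnit Q.det :=
    stmt15_isUnit_det_aux (stmt15_posDef_add_one hpos) h2I hQsub
  have hQbdet : IsUnit Qb.det := by
    rw [← hQH, Matrix.det_conjTranspose]
    exact hQdet.star
  have hPbdet : IsUnit Pb.det := by
    rw [← hPH, Matrix.det_conjTranspose]
    exact hPdet.star
  have hDsub : D - Dᴴ = (-(4 * Complex.I)) • Mh := by
    rw [hDH, sub_neg_eq_add, show (-(4 * Complex.I)) = (-2) * (2 * Complex.I) from by ring,
      mul_smul, hMh, smul_inv_smul₀ h2I, hDdef, neg_smul, two_smul]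
    abel
  have h4I : (-(4 * Complex.I)) ≠ 0 := by
    simp [Complex.I_ne_zero]
  have hDdet : IsUnit D.det := stmt15_isUnit_det_aux hpos h4I hDsub
  -- algebraic relations
  have hQb_eq : Qb = P + D := by rw [hQbdef, hPdef, hDdef]; abel
  have hPb_eq : Pb = Q + D := by rw [hPbdef, hQdef, hDdef]; abel
  have hP_eq : P = Qb - D := by rw [hQbdef, hPdef, hDdef]; abel
  have hQ_eq : Q = Pb - D := by rw [hPbdef, hQdef, hDdef]; abel
  have hPbQb : Pb - Qb = (2 * Complex.I) • 1 := by
    rw [hPbdef, hQbdef, mul_smul, two_smul]; abel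
  have hQP2 : Q - P = (2 * Complex.I) • 1 := by
    rw [hQdef, hPdef, mul_smul, two_smul]; abel
  have hc : Commute v (Complex.I • 1) := by
    unfold Commute SemiconjBy
    rw [Matrix.mul_smul, Matrix.smul_mul, one_mul, mul_one]
  have hPQ : P * Q = Q * P :=
    (((Commute.refl v).add_right hc).sub_left (hc.symm.add_right (Commute.refl _))).eq
  -- conjugation relations
  have hPc : P.map (starRingEnd ℂ) = Pb := by
    ext i j
    simp [hPdef, hPbdef, hvb, Matrix.map_apply, Matrix.sub_apply, Matrix.add_apply,
      Matrix.smul_apply, Matrix.one_apply, apply_ite (starRingEnd ℂ), Complex.conj_I,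
      smul_eq_mul, sub_eq_add_neg]
    split_ifs <;> simp
  have hQc : Q.map (starRingEnd ℂ) = Qb := by
    ext i j
    simp [hQdef, hQbdef, hvb, Matrix.map_apply, Matrix.sub_apply, Matrix.add_apply,
      Matrix.smul_apply, Matrix.one_apply, apply_ite (starRingEnd ℂ), Complex.conj_I,
      smul_eq_mul, sub_eq_add_neg]
    split_ifs <;> simp
  have hQbc : Qb.map (starRingEnd ℂ) = Q := by
    ext i j
    simp [hQdef, hQbdef, hvb, Matrix.map_apply, Matrix.sub_apply, Matrix.add_apply,
      Matrix.smul_apply, Matrix.one_apply, apply_ite (starRingEnd ℂ), Complex.conj_I,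
      smul_eq_mul, sub_eq_add_neg]
    split_ifs <;> simp
  have hDc : D.map (starRingEnd ℂ) = -D := by
    ext i j
    simp [hDdef, hvb, Matrix.map_apply, Matrix.sub_apply, Matrix.neg_apply]
  have hDinvc : D⁻¹.map (starRingEnd ℂ) = -(D⁻¹) := by
    have h1 : (-D)⁻¹ = -(D⁻¹) :=
      Matrix.inv_eq_right_inv (by rw [neg_mul_neg, Matrix.mul_nonsing_inv _ hDdet])
    have h2 : (-D)⁻¹ = D⁻¹.map (starRingEnd ℂ) :=
      Matrix.inv_eq_right_inv (by
        rw [← hDc, ← Matrix.map_mul, Matrix.mul_nonsing_inv _ hDdet]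
        exact Matrix.map_one _ (map_zero _) (map_one _))
    rw [← h2, h1]
  have hPinvc : P⁻¹.map (starRingEnd ℂ) = Pb⁻¹ :=
    (Matrix.inv_eq_right_inv (by
      rw [← hPc, ← Matrix.map_mul, Matrix.mul_nonsing_inv _ hPdet]
      exact Matrix.map_one _ (map_zero _) (map_one _))).symm
  have hQbinvc : Qb⁻¹.map (starRingEnd ℂ) = Q⁻¹ :=
    (Matrix.inv_eq_right_inv (by
      rw [← hQbc, ← Matrix.map_mul, Matrix.mul_nonsing_inv _ hQbdet]
      exact Matrix.map_one _ (map_zero _) (map_one _))).symm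
  have hCc : C.map (starRingEnd ℂ) = -(Q * D⁻¹ * Pb) := by
    rw [hCdef, Matrix.map_mul, Matrix.map_mul, hQbc, hPc, hDinvc, mul_neg, neg_mul]
  clear_value vb Mh P Q Qb Pb D C
  -- key matrix identities
  have e3 : Q * (Qb * D⁻¹) = Q * (P * D⁻¹) + Q := by
    rw [hQb_eq, Matrix.add_mul, Matrix.mul_add, Matrix.mul_nonsing_inv _ hDdet, mul_one]
  have hcomm : Q * (P * D⁻¹) = P * (Q * D⁻¹) := by
    rw [← Matrix.mul_assoc, ← Matrix.mul_assoc, hPQ]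
  have idU : Q * (C * P⁻¹) - P * (Q * (D⁻¹ * (Pb * Q⁻¹))) = (2 * Complex.I) • 1 := by
    have e1 : Q * (C * P⁻¹) = Q * (Qb * D⁻¹) := by
      rw [hCdef]
      simp only [Matrix.mul_assoc]
      rw [Matrix.mul_nonsing_inv _ hPdet, mul_one]
    have e2 : P * (Q * (D⁻¹ * (Pb * Q⁻¹))) = P * (Q * D⁻¹) + P := by
      rw [hPb_eq, Matrix.add_mul, Matrix.mul_nonsing_inv _ hQdet, Matrix.mul_add,
        Matrix.nonsing_inv_mul_cancel_left _ _ hDdet, mul_one, Matrix.mul_add,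
        Matrix.mul_add, Matrix.mul_nonsing_inv _ hQdet, mul_one]
    rw [e1, e2, e3, ← hcomm, ← hQP2]
    abel
  have idUb : P * (Q * (D⁻¹ * (Pb * Pb⁻¹))) - Q * (C * Qb⁻¹) = 0 := by
    have f1 : P * (Q * (D⁻¹ * (Pb * Pb⁻¹))) = P * (Q * D⁻¹) := by
      rw [Matrix.mul_nonsing_inv _ hPbdet, mul_one]
    have f2 : Q * (C * Qb⁻¹) = P * (Q * D⁻¹) := by
      have hstep : D⁻¹ * (P * Qb⁻¹) = D⁻¹ - Qb⁻¹ := by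
        rw [hP_eq, Matrix.sub_mul, Matrix.mul_nonsing_inv _ hQbdet, Matrix.mul_sub, mul_one,
          Matrix.nonsing_inv_mul_cancel_left _ _ hDdet]
      rw [hCdef]
      simp only [Matrix.mul_assoc]
      rw [hstep, Matrix.mul_sub, Matrix.mul_nonsing_inv _ hQbdet, Matrix.mul_sub, mul_one, e3,
        add_sub_cancel_right, hcomm]
    rw [f1, f2, sub_self]
  have id2 : C * (P⁻¹ * Q - Qb⁻¹ * Pb) = (2 * Complex.I) • 1 := by
    rw [Matrix.mul_sub, hCdef]
    simp only [Matrix.mul_assoc]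
    rw [Matrix.mul_nonsing_inv_cancel_left _ _ hPdet]
    have hstep2 : D⁻¹ * (P * (Qb⁻¹ * Pb)) = D⁻¹ * Pb - Qb⁻¹ * Pb := by
      rw [hP_eq, Matrix.sub_mul, Matrix.mul_nonsing_inv_cancel_left _ _ hQbdet,
        Matrix.mul_sub, Matrix.nonsing_inv_mul_cancel_left _ _ hDdet]
    rw [hstep2, Matrix.mul_sub, Matrix.mul_nonsing_inv_cancel_left _ _ hQbdet, hQ_eq,
      Matrix.mul_sub, Matrix.nonsing_inv_mul _ hDdet, Matrix.mul_sub, mul_one, ← hPbQb]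
    abel
  intro u
  constructor
  · -- the formula gives a preimage
    have hws : star (P⁻¹.mulVec u - Qb⁻¹.mulVec (star u))
        = Pb⁻¹.mulVec (star u) - Q⁻¹.mulVec u := by
      rw [star_sub, stmt15_star_mulVec, stmt15_star_mulVec, star_star, hPinvc, hQbinvc]
    rw [stmt15_star_mulVec, hCc, hws]
    simp only [Matrix.mulVec_sub, Matrix.mulVec_mulVec, neg_mul, mul_neg, Matrix.neg_mulVec,
      Matrix.mulVec_neg, Matrix.mulVec_add, sub_neg_eq_add, Matrix.mul_assoc]
    have hre : ∀ (a b c d : Fin n → ℂ), a - b - (-c + d) = a - d + (c - b) := by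
      intros; abel
    rw [hre, ← Matrix.sub_mulVec, ← Matrix.sub_mulVec, idU, idUb, Matrix.zero_mulVec,
      add_zero, Matrix.smul_mulVec, Matrix.one_mulVec, inv_smul_smul₀ h2I]
  · intro η hu
    have hsu : star u = (2 * Complex.I)⁻¹ • (Pb.mulVec η - Qb.mulVec (star η)) := by
      rw [hu, star_smul, star_sub, stmt15_star_mulVec, stmt15_star_mulVec, star_star, hQc, hPc]
      rw [show star ((2 * Complex.I)⁻¹) = -(2 * Complex.I)⁻¹ from by
        simp [Complex.star_def, map_inv₀]]
      rw [neg_smul, ← smul_neg, neg_sub]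
    rw [hsu, hu]
    rw [Matrix.mulVec_smul, Matrix.mulVec_smul, ← smul_sub, Matrix.mulVec_smul]
    simp only [Matrix.mulVec_sub, Matrix.mulVec_mulVec]
    rw [Matrix.nonsing_inv_mul _ hPdet, Matrix.nonsing_inv_mul _ hQbdet, mul_one,
      sub_sub_sub_cancel_right, ← Matrix.sub_mulVec, ← mul_sub C (P⁻¹ * Q) (Qb⁻¹ * Pb),
      id2, Matrix.smul_mulVec, Matrix.one_mulVec, inv_smul_smul₀ h2I]
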